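/- arXiv:1206.5120 — 2 statements merged into one kernel-verified Lean document; each statement's English description precedes it below -/
import Mathlib

section
/- The 1-sum operation preserves the strong uniqueness property: if graphs G and G' each have the strong uniqueness property and share exactly one vertex, then the graph G'' obtained as their union (gluing at that vertex) has the strong uniqueness property. -/
open scoped Classical
open MeasureTheory

/-- The cost of a walk `p` for a user with arc cost functions `c`, given arc flows
`f`: the sum over the darts (directed edges) of `p` of the arc cost at the flow. -/
noncomputable def walkCost {V : Type} {G : SimpleGraph V}
    (c : V × V → ℝ → ℝ) (f : V × V → ℝ) {u v : V} (p : G.Walk u v) : ℝ :=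
  (p.darts.map (fun d => c d.toProd (f d.toProd))).sum

/-- The flow on the arc `a` induced by a strategy profile `σ` assigning to each user
a walk from their origin to their destination. -/
noncomputable def walkFlow {V I : Type} [MeasurableSpace I] (μ : Measure I)
    {G : SimpleGraph V} (od : I → V × V)
    (σ : (i : I) → G.Walk (od i).1 (od i).2) (a : V × V) : ℝ :=
  (μ {i | a ∈ (σ i).darts.map SimpleGraph.Dart.toProd}).toReal

/-- `σ` is a Nash equilibrium: every user's chosen route has minimal cost, given the
induced flows, among all routes (paths) from the user's origin to their destination. -/
def IsWalkEquilibrium {V I : Type} [MeasurableSpace I] (μ : Measure I)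
    {G : SimpleGraph V} (od : I → V × V) (c : I → V × V → ℝ → ℝ)
    (σ : (i : I) → G.Walk (od i).1 (od i).2) : Prop :=
  ∀ (i : I) (p : G.Walk (od i).1 (od i).2), p.IsPath →
    walkCost (c i) (walkFlow μ od σ) (σ i) ≤ walkCost (c i) (walkFlow μ od σ) p

/-- The graph `G` together with the demand digraph consisting of the OD-pairs in `Hd`
has the uniqueness property: for every nonatomic population with OD-pairs in `Hd` and
every assignment of strictly increasing continuous nonnegative user-specific cost
functions, all Nash equilibria induce the same arc flows. -/
def GraphUniquenessProperty {V : Type} (G : SimpleGraph V) (Hd : Set (V × V)) : Prop :=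
  ∀ (I : Type) (m : MeasurableSpace I) (μ : @Measure I m),
    @IsFiniteMeasure I m μ →
    ∀ od : I → V × V, (∀ i, od i ∈ Hd) →
    ∀ c : I → V × V → ℝ → ℝ,
      (∀ i a, StrictMono (c i a)) → (∀ i a, Continuous (c i a)) →
      (∀ i a x, 0 ≤ c i a x) →
    ∀ σ σ' : (i : I) → G.Walk (od i).1 (od i).2,
      (∀ i, (σ i).IsPath) → (∀ i, (σ' i).IsPath) →
      (∀ a : V × V,
        @MeasurableSet I m {i | a ∈ (σ i).darts.map SimpleGraph.Dart.toProd}) →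
      (∀ a : V × V,
        @MeasurableSet I m {i | a ∈ (σ' i).darts.map SimpleGraph.Dart.toProd}) →
      @IsWalkEquilibrium V I m μ G od c σ → @IsWalkEquilibrium V I m μ G od c σ' →
      ∀ a : V × V, @walkFlow V I m μ G od σ a = @walkFlow V I m μ G od σ' a

/-- `G` has the strong uniqueness property: the uniqueness property holds for every
simple demand digraph on its vertices, i.e. for every choice of OD-pairs of distinct
vertices. -/
def StrongUniquenessProperty {V : Type} (G : SimpleGraph V) : Prop :=
  ∀ Hd : Set (V × V), (∀ ℓ ∈ Hd, ℓ.1 ≠ ℓ.2) → GraphUniquenessProperty G Hd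

section Aux

open SimpleGraph

variable {V : Type}

/-- the sigmoid-like bounded cost function used for dummy users -/
noncomputable def csig : ℝ → ℝ := fun x => 1 + (1 + Real.exp (-x))⁻¹

lemma one_lt_csig (x : ℝ) : 1 < csig x := by
  have h : (0:ℝ) < 1 + Real.exp (-x) := by positivity
  have : 0 < (1 + Real.exp (-x))⁻¹ := by positivity
  simp only [csig]; linarith

lemma csig_lt_two (x : ℝ) : csig x < 2 := by
  have h : (1:ℝ) < 1 + Real.exp (-x) := by nlinarith [Real.exp_pos (-x)]
  have : (1 + Real.exp (-x))⁻¹ < 1 := by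
    rw [inv_lt_one_iff₀]; right; exact h
  simp only [csig]; linarith

lemma csig_nonneg (x : ℝ) : 0 ≤ csig x := le_of_lt (lt_trans one_pos (one_lt_csig x))

lemma csig_strictMono : StrictMono csig := by
  intro x y hxy
  have h1 : Real.exp (-y) < Real.exp (-x) := Real.exp_lt_exp.2 (by linarith)
  have h2 : (0:ℝ) < 1 + Real.exp (-y) := by positivity
  have := inv_strictAnti₀ (by positivity : (0:ℝ) < 1 + Real.exp (-y)) (by linarith : 1 + Real.exp (-y) < 1 + Real.exp (-x))
  simp only [csig]
  linarith

lemma csig_continuous : Continuous csig := by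
  apply continuous_const.add
  apply Continuous.inv₀
  · exact continuous_const.add (Real.continuous_exp.comp continuous_neg)
  · intro x; positivity

lemma walkCost_eq {G : SimpleGraph V} (c : V × V → ℝ → ℝ) (f : V × V → ℝ) {u v : V}
    (p : G.Walk u v) :
    walkCost c f p = ((p.darts.map Dart.toProd).map (fun b => c b (f b))).sum := by
  rw [walkCost, List.map_map]; rfl

lemma dartsProd_append {G : SimpleGraph V} {u v w : V} (p : G.Walk u v) (q : G.Walk v w) :
    ((p.append q).darts.map Dart.toProd) = p.darts.map Dart.toProd ++ q.darts.map Dart.toProd := by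
  rw [Walk.darts_append, List.map_append]

lemma adj_of_mem_dartsProd {G : SimpleGraph V} {u v : V} {p : G.Walk u v} {b : V × V}
    (h : b ∈ p.darts.map Dart.toProd) : G.Adj b.1 b.2 := by
  rcases List.mem_map.1 h with ⟨d, _, rfl⟩
  exact d.adj

lemma dartsProd_transfer {G H : SimpleGraph V} {u v : V} (p : G.Walk u v) (hp) :
    ((p.transfer H hp).darts.map Dart.toProd) = p.darts.map Dart.toProd := by
  induction p with
  | nil => rfl
  | cons h q ih => exact congrArg (List.cons _) (ih _)

def liftW {G H : SimpleGraph V} (hle : G ≤ H) {u v : V} (p : G.Walk u v) : H.Walk u v :=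
  p.transfer H (fun e he => (SimpleGraph.edgeSet_subset_edgeSet.2 hle) (p.edges_subset_edgeSet he))

lemma dartsProd_liftW {G H : SimpleGraph V} (hle : G ≤ H) {u v : V} (p : G.Walk u v) :
    ((liftW hle p).darts.map Dart.toProd) = p.darts.map Dart.toProd :=
  dartsProd_transfer p _

lemma support_liftW {G H : SimpleGraph V} (hle : G ≤ H) {u v : V} (p : G.Walk u v) :
    (liftW hle p).support = p.support := Walk.support_transfer p _

lemma isPath_liftW {G H : SimpleGraph V} (hle : G ≤ H) {u v : V} (p : G.Walk u v) :
    (liftW hle p).IsPath ↔ p.IsPath := by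
  rw [Walk.isPath_def, Walk.isPath_def, support_liftW]

lemma walkCost_liftW {G H : SimpleGraph V} (hle : G ≤ H) {u v : V} (p : G.Walk u v)
    (c : V × V → ℝ → ℝ) (f : V × V → ℝ) :
    walkCost c f (liftW hle p) = walkCost c f p := by
  rw [walkCost_eq, walkCost_eq, dartsProd_liftW]

lemma walkCost_append {G : SimpleGraph V} {u v w : V} (p : G.Walk u v) (q : G.Walk v w)
    (c : V × V → ℝ → ℝ) (f : V × V → ℝ) :
    walkCost c f (p.append q) = walkCost c f p + walkCost c f q := by
  simp [walkCost, Walk.darts_append]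

lemma walkCost_nonneg {G : SimpleGraph V} {u v : V} (p : G.Walk u v)
    (c : V × V → ℝ → ℝ) (f : V × V → ℝ) (hc : ∀ b x, 0 ≤ c b x) :
    0 ≤ walkCost c f p := by
  apply List.sum_nonneg
  intro x hx
  rcases List.mem_map.1 hx with ⟨d, _, rfl⟩
  exact hc _ _

end Aux

section Decomp

open SimpleGraph

variable {V : Type} {GG G G' : SimpleGraph V} {v₀ : V} {S S' : Set V}

lemma eq_v₀ (hinter : S ∩ S' = {v₀}) {x : V} (h : x ∈ S) (h' : x ∈ S') : x = v₀ := by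
  have hx : x ∈ S ∩ S' := ⟨h, h'⟩
  rw [hinter] at hx; exact hx

lemma not_adj_both (hGS : ∀ {a b : V}, G.Adj a b → a ∈ S ∧ b ∈ S)
    (hGS' : ∀ {a b : V}, G'.Adj a b → a ∈ S' ∧ b ∈ S')
    (hinter : S ∩ S' = {v₀}) {x y : V} (h : G.Adj x y) (h' : G'.Adj x y) : False := by
  have hx : x = v₀ := eq_v₀ hinter (hGS h).1 (hGS' h').1
  have hy : y = v₀ := eq_v₀ hinter (hGS h).2 (hGS' h').2
  exact h.ne (hx.trans hy.symm)

lemma support_mem_S (hGS : ∀ {a b : V}, G.Adj a b → a ∈ S ∧ b ∈ S)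
    {u w : V} (p : G.Walk u w) (hu : u ∈ S) : ∀ x ∈ p.support, x ∈ S := by
  induction p with
  | nil =>
    intro x hx; rw [Walk.support_nil, List.mem_singleton] at hx; exact hx ▸ hu
  | cons h q ih =>
    intro x hx
    rw [Walk.support_cons, List.mem_cons] at hx
    rcases hx with rfl | hx
    · exact hu
    · exact ih (hGS h).2 x hx

lemma start_mem_union (hadj : ∀ x y : V, GG.Adj x y ↔ G.Adj x y ∨ G'.Adj x y)
    (hGS : ∀ {a b : V}, G.Adj a b → a ∈ S ∧ b ∈ S)
    (hGS' : ∀ {a b : V}, G'.Adj a b → a ∈ S' ∧ b ∈ S')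
    {u w : V} (p : GG.Walk u w) (hne : u ≠ w) : u ∈ S ∪ S' := by
  cases p with
  | nil => exact absurd rfl hne
  | cons h q =>
    rcases (hadj _ _).1 h with h1 | h2
    · exact Or.inl (hGS h1).1
    · exact Or.inr (hGS' h2).1

lemma reach_v₀ (hadj : ∀ x y : V, GG.Adj x y ↔ G.Adj x y ∨ G'.Adj x y)
    (hGS : ∀ {a b : V}, G.Adj a b → a ∈ S ∧ b ∈ S)
    (hGS' : ∀ {a b : V}, G'.Adj a b → a ∈ S' ∧ b ∈ S')
    (hinter : S ∩ S' = {v₀})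
    {u w : V} (p : GG.Walk u w) : u ∈ S' → w ∈ S → v₀ ∈ p.support := by
  induction p with
  | nil =>
    intro hu hw
    rw [Walk.support_nil, List.mem_singleton]
    exact (eq_v₀ hinter hw hu).symm
  | @cons x y z h q ih =>
    intro hu hw
    rw [Walk.support_cons, List.mem_cons]
    by_cases hus : x ∈ S
    · exact Or.inl (eq_v₀ hinter hus hu).symm
    · rcases (hadj _ _).1 h with h1 | h2
      · exact absurd (hGS h1).1 hus
      · exact Or.inr (ih (hGS' h2).2 hw)

lemma edges_in_G (hadj : ∀ x y : V, GG.Adj x y ↔ G.Adj x y ∨ G'.Adj x y)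
    (hGS : ∀ {a b : V}, G.Adj a b → a ∈ S ∧ b ∈ S)
    (hGS' : ∀ {a b : V}, G'.Adj a b → a ∈ S' ∧ b ∈ S')
    (hinter : S ∩ S' = {v₀})
    {u w : V} (p : GG.Walk u w) : p.IsPath → u ∈ S → w ∈ S →
      ∀ e ∈ p.edges, e ∈ G.edgeSet := by
  induction p with
  | nil => intro _ _ _ e he; simp [Walk.edges_nil] at he
  | @cons x y z h q ih =>
    intro hp hu hw e he
    have hq := (Walk.cons_isPath_iff h q).1 hp
    rcases (hadj _ _).1 h with h1 | h2
    · rw [Walk.edges_cons, List.mem_cons] at he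
      rcases he with rfl | he
      · exact (mem_edgeSet _).2 h1
      · exact ih hq.1 (hGS h1).2 hw e he
    · exfalso
      have huv : x = v₀ := eq_v₀ hinter hu (hGS' h2).1
      have : v₀ ∈ q.support := reach_v₀ hadj hGS hGS' hinter q (hGS' h2).2 hw
      exact hq.2 (huv ▸ this)

lemma decompA (hadj : ∀ x y : V, GG.Adj x y ↔ G.Adj x y ∨ G'.Adj x y)
    (hGS : ∀ {a b : V}, G.Adj a b → a ∈ S ∧ b ∈ S)
    (hGS' : ∀ {a b : V}, G'.Adj a b → a ∈ S' ∧ b ∈ S')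
    (hinter : S ∩ S' = {v₀}) (hle : G ≤ GG)
    {u w : V} (p : GG.Walk u w) (hp : p.IsPath) (hu : u ∈ S) (hw : w ∈ S) :
    ∃ q : G.Walk u w, q.IsPath ∧ p = liftW hle q := by
  have hE := edges_in_G hadj hGS hGS' hinter p hp hu hw
  refine ⟨p.transfer G hE, ?_, ?_⟩
  · rw [Walk.isPath_def, Walk.support_transfer]
    exact (Walk.isPath_def p).1 hp
  · show p = (p.transfer G hE).transfer GG _
    rw [Walk.transfer_transfer]
    exact (Walk.transfer_self p).symm

lemma decompB (hadj : ∀ x y : V, GG.Adj x y ↔ G.Adj x y ∨ G'.Adj x y)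
    (hGS : ∀ {a b : V}, G.Adj a b → a ∈ S ∧ b ∈ S)
    (hGS' : ∀ {a b : V}, G'.Adj a b → a ∈ S' ∧ b ∈ S')
    (hinter : S ∩ S' = {v₀}) (hle : G ≤ GG) (hle' : G' ≤ GG)
    {u w : V} (p : GG.Walk u w) (hp : p.IsPath) (hu : u ∈ S) (hw : w ∈ S') :
    ∃ (q : G.Walk u v₀) (r : G'.Walk v₀ w), q.IsPath ∧ r.IsPath ∧
      p = (liftW hle q).append (liftW hle' r) := by
  have hv₀ : v₀ ∈ S ∩ S' := by rw [hinter]; rfl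
  have hadj' : ∀ x y : V, GG.Adj x y ↔ G'.Adj x y ∨ G.Adj x y :=
    fun x y => (hadj x y).trans or_comm
  have hinter' : S' ∩ S = {v₀} := by rw [Set.inter_comm]; exact hinter
  have hmem : v₀ ∈ p.support :=
    reach_v₀ hadj' hGS' hGS hinter' p hu hw
  obtain ⟨q, hq, hq2⟩ := decompA hadj hGS hGS' hinter hle (p.takeUntil v₀ hmem)
    (hp.takeUntil hmem) hu hv₀.1
  obtain ⟨r, hr, hr2⟩ := decompA hadj' hGS' hGS hinter' hle' (p.dropUntil v₀ hmem)
    (hp.dropUntil hmem) hv₀.2 hw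
  exact ⟨q, r, hq, hr, by rw [← hq2, ← hr2]; exact (p.take_spec hmem).symm⟩

lemma notT_no_Gdart (hadj : ∀ x y : V, GG.Adj x y ↔ G.Adj x y ∨ G'.Adj x y)
    (hGS : ∀ {a b : V}, G.Adj a b → a ∈ S ∧ b ∈ S)
    (hGS' : ∀ {a b : V}, G'.Adj a b → a ∈ S' ∧ b ∈ S')
    (hinter : S ∩ S' = {v₀})
    {o d : V} (hne : o ≠ d) (τ : GG.Walk o d) (hτ : τ.IsPath)
    (hT : ¬ ((o ∈ S ∧ d ∈ S) ∨ (o ∈ S ∧ o ∉ S' ∧ d ∈ S' ∧ d ∉ S) ∨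
        (o ∈ S' ∧ o ∉ S ∧ d ∈ S ∧ d ∉ S')))
    {b : V × V} (hb : b ∈ τ.darts.map SimpleGraph.Dart.toProd) (hbG : G.Adj b.1 b.2) :
    False := by
  have hadj' : ∀ x y : V, GG.Adj x y ↔ G'.Adj x y ∨ G.Adj x y :=
    fun x y => (hadj x y).trans or_comm
  have hinter' : S' ∩ S = {v₀} := by rw [Set.inter_comm]; exact hinter
  have ho : o ∈ S ∪ S' := start_mem_union hadj hGS hGS' τ hne
  have hd : d ∈ S ∪ S' := by
    have := start_mem_union hadj' hGS' hGS τ.reverse hne.symm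
    rcases this with h | h
    · exact Or.inr h
    · exact Or.inl h
  have hS' : o ∈ S' ∧ d ∈ S' := by
    rcases ho with h | h <;> rcases hd with h2 | h2
    · exact absurd (Or.inl ⟨h, h2⟩) hT
    · by_cases h3 : o ∈ S'
      · exact ⟨h3, h2⟩
      · exact absurd (Or.inr (Or.inl ⟨h, h3, h2, fun h4 => hT (Or.inl ⟨h, h4⟩)⟩)) hT
    · by_cases h3 : d ∈ S'
      · exact ⟨h, h3⟩
      · exact absurd (Or.inr (Or.inr ⟨h, fun h4 => hT (Or.inl ⟨h4, h2⟩), h2, h3⟩)) hT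
    · exact ⟨h, h2⟩
  have hedges := edges_in_G hadj' hGS' hGS hinter' τ hτ hS'.1 hS'.2
  rcases List.mem_map.1 hb with ⟨dd, hdd, rfl⟩
  have hdedge : dd.edge ∈ τ.edges := List.mem_map_of_mem hdd
  have : G'.Adj dd.toProd.1 dd.toProd.2 := (mem_edgeSet _).1 (hedges _ hdedge)
  exact not_adj_both hGS hGS' hinter hbG this

end Decomp

section Game

open SimpleGraph

variable {V : Type}

def TSet (S S' : Set V) (p : V × V) : Prop :=
  (p.1 ∈ S ∧ p.2 ∈ S) ∨ (p.1 ∈ S ∧ p.1 ∉ S' ∧ p.2 ∈ S' ∧ p.2 ∉ S) ∨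
    (p.1 ∈ S' ∧ p.1 ∉ S ∧ p.2 ∈ S ∧ p.2 ∉ S')

noncomputable def odGfun (S S' : Set V) (v₀ : V) (a : V × V) (p : V × V) : V × V :=
  if p.1 ∈ S ∧ p.2 ∈ S then p
  else if p.1 ∈ S ∧ p.1 ∉ S' ∧ p.2 ∈ S' ∧ p.2 ∉ S then (p.1, v₀)
  else if p.1 ∈ S' ∧ p.1 ∉ S ∧ p.2 ∈ S ∧ p.2 ∉ S' then (v₀, p.2)
  else a

lemma odGfun_notT {S S' : Set V} {v₀ : V} {a : V × V} {p : V × V} (hT : ¬ TSet S S' p) :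
    odGfun S S' v₀ a p = a := by
  rw [odGfun, if_neg (fun h => hT (Or.inl h)), if_neg (fun h => hT (Or.inr (Or.inl h))),
    if_neg (fun h => hT (Or.inr (Or.inr h)))]

lemma odGfun_ne {S S' : Set V} {v₀ : V} {a : V × V} (hv₀S : v₀ ∈ S) (hv₀S' : v₀ ∈ S')
    {p : V × V} (hne : p.1 ≠ p.2) (hane : a.1 ≠ a.2) :
    (odGfun S S' v₀ a p).1 ≠ (odGfun S S' v₀ a p).2 := by
  rw [odGfun]
  split_ifs with h1 h3 h4
  · exact hne
  · exact fun e => h3.2.1 (show p.1 ∈ S' from e ▸ hv₀S')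
  · exact fun e => h4.2.2.2 (show p.2 ∈ S' from e ▸ hv₀S')
  · exact hane

lemma exists_w {G G' : SimpleGraph V} {v₀ : V} {S S' : Set V}
    (hGS : ∀ {a b : V}, G.Adj a b → a ∈ S ∧ b ∈ S)
    (hGS' : ∀ {a b : V}, G'.Adj a b → a ∈ S' ∧ b ∈ S')
    (hinter : S ∩ S' = {v₀})
    {a : V × V} (haG : G.Adj a.1 a.2)
    (p : V × V) (τ : (G ⊔ G').Walk p.1 p.2) (hτ : τ.IsPath) :
    ∃ w : G.Walk (odGfun S S' v₀ a p).1 (odGfun S S' v₀ a p).2,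
      w.IsPath ∧
      (TSet S S' p → ∀ b : V × V, b ∈ w.darts.map Dart.toProd ↔
        (b ∈ τ.darts.map Dart.toProd ∧ G.Adj b.1 b.2)) ∧
      (¬ TSet S S' p → w.darts.map Dart.toProd = [a]) ∧
      (TSet S S' p → ∀ pq : G.Walk (odGfun S S' v₀ a p).1 (odGfun S S' v₀ a p).2,
        pq.IsPath →
        ∃ P : (G ⊔ G').Walk p.1 p.2, P.IsPath ∧ ∀ (cc : V × V → ℝ → ℝ) (f : V × V → ℝ),
          walkCost cc f τ + walkCost cc f pq = walkCost cc f P + walkCost cc f w) := by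
  have hadj : ∀ x y : V, (G ⊔ G').Adj x y ↔ G.Adj x y ∨ G'.Adj x y := fun x y => sup_adj G G' x y
  have hle : G ≤ G ⊔ G' := le_sup_left
  have hle' : G' ≤ G ⊔ G' := le_sup_right
  have hadj' : ∀ x y : V, (G ⊔ G').Adj x y ↔ G'.Adj x y ∨ G.Adj x y :=
    fun x y => (hadj x y).trans or_comm
  have hinter' : S' ∩ S = {v₀} := by rw [Set.inter_comm]; exact hinter
  have hv₀ : v₀ ∈ S ∩ S' := by rw [hinter]; rfl
  by_cases h1 : p.1 ∈ S ∧ p.2 ∈ S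
  · rw [odGfun, if_pos h1]
    obtain ⟨q, hq, rfl⟩ := decompA hadj hGS hGS' hinter hle τ hτ h1.1 h1.2
    refine ⟨q, hq, ?_, fun hT => absurd (Or.inl h1) hT, ?_⟩
    · intro _ b
      rw [dartsProd_liftW]
      exact ⟨fun h => ⟨h, adj_of_mem_dartsProd h⟩, fun h => h.1⟩
    · intro _ pq hpq
      refine ⟨liftW hle pq, (isPath_liftW hle pq).2 hpq, fun cc f => ?_⟩
      rw [walkCost_liftW, walkCost_liftW]; ring
  · by_cases h3 : p.1 ∈ S ∧ p.1 ∉ S' ∧ p.2 ∈ S' ∧ p.2 ∉ S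
    · rw [odGfun, if_neg h1, if_pos h3]
      obtain ⟨q, r, hq, hr, rfl⟩ := decompB hadj hGS hGS' hinter hle hle' τ hτ h3.1 h3.2.2.1
      refine ⟨q, hq, ?_, fun hT => absurd (Or.inr (Or.inl h3)) hT, ?_⟩
      · intro _ b
        rw [dartsProd_append, dartsProd_liftW, dartsProd_liftW]
        constructor
        · intro h
          exact ⟨List.mem_append_left _ h, adj_of_mem_dartsProd h⟩
        · rintro ⟨hmem, hbG⟩
          rcases List.mem_append.1 hmem with h | h
          · exact h
          · exact absurd (adj_of_mem_dartsProd h) (fun h' => not_adj_both hGS hGS' hinter hbG h')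
      · intro _ pq hpq
        refine ⟨(liftW hle pq).append (liftW hle' r), ?_, fun cc f => ?_⟩
        · rw [Walk.isPath_def, Walk.support_append, support_liftW, support_liftW]
          have hrn := (Walk.isPath_def r).1 hr
          rw [r.support_eq_cons] at hrn
          obtain ⟨hv₀nt, htail⟩ := List.nodup_cons.1 hrn
          refine List.Nodup.append ((Walk.isPath_def pq).1 hpq) htail ?_
          intro x hx hx'
          have hxS : x ∈ S := support_mem_S hGS pq h3.1 x hx
          have hxS' : x ∈ S' :=
            support_mem_S hGS' r hv₀.2 x (List.tail_subset _ hx')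
          exact hv₀nt ((eq_v₀ hinter hxS hxS') ▸ hx')
        · simp only [walkCost_append, walkCost_liftW]
          ring
    · by_cases h4 : p.1 ∈ S' ∧ p.1 ∉ S ∧ p.2 ∈ S ∧ p.2 ∉ S'
      · rw [odGfun, if_neg h1, if_neg h3, if_pos h4]
        obtain ⟨q, r, hq, hr, rfl⟩ :=
          decompB hadj' hGS' hGS hinter' hle' hle τ hτ h4.1 h4.2.2.1
        refine ⟨r, hr, ?_, fun hT => absurd (Or.inr (Or.inr h4)) hT, ?_⟩
        · intro _ b
          rw [dartsProd_append, dartsProd_liftW, dartsProd_liftW]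
          constructor
          · intro h
            exact ⟨List.mem_append_right _ h, adj_of_mem_dartsProd h⟩
          · rintro ⟨hmem, hbG⟩
            rcases List.mem_append.1 hmem with h | h
            · exact absurd (adj_of_mem_dartsProd h)
                (fun h' => not_adj_both hGS hGS' hinter hbG h')
            · exact h
        · intro _ pq hpq
          refine ⟨(liftW hle' q).append (liftW hle pq), ?_, fun cc f => ?_⟩
          · rw [Walk.isPath_def, Walk.support_append, support_liftW, support_liftW]
            have hpn := (Walk.isPath_def pq).1 hpq
            rw [pq.support_eq_cons] at hpn
            obtain ⟨hv₀nt, htail⟩ := List.nodup_cons.1 hpn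
            refine List.Nodup.append ((Walk.isPath_def q).1 hq) htail ?_
            intro x hx hx'
            have hxS' : x ∈ S' := support_mem_S hGS' q h4.1 x hx
            have hxS : x ∈ S :=
              support_mem_S hGS pq hv₀.1 x (List.tail_subset _ hx')
            exact hv₀nt ((eq_v₀ hinter hxS hxS') ▸ hx')
          · simp only [walkCost_append, walkCost_liftW]
            ring
      · have hT : ¬ TSet S S' p := by
          rintro (h | h | h)
          exacts [h1 h, h3 h, h4 h]
        rw [odGfun_notT hT]
        refine ⟨Walk.cons haG Walk.nil, ?_, fun hT' => absurd hT' hT, fun _ => ?_,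
          fun hT' => absurd hT' hT⟩
        · rw [Walk.cons_isPath_iff]
          exact ⟨Walk.IsPath.nil, by simp [haG.ne]⟩
        · simp [Walk.darts_cons, Walk.darts_nil]
end Game

section Dummy

open SimpleGraph

variable {V : Type}

lemma dummyMin {G : SimpleGraph V} {a : V × V} (ha : G.Adj a.1 a.2) (f : V × V → ℝ)
    {x y : V} (pq : G.Walk x y) (hp : pq.IsPath) (hx : x = a.1) (hy : y = a.2) :
    csig (f a) ≤ walkCost (fun _ => csig) f pq := by
  obtain ⟨a1, a2⟩ := a
  simp only at hx hy ha ⊢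
  subst hx; subst hy
  cases pq with
  | nil => exact absurd rfl ha.ne
  | @cons _ z _ h q =>
    cases q with
    | nil =>
      simp only [walkCost, Walk.darts_cons, Walk.darts_nil, List.map_cons, List.map_nil,
        List.sum_cons, List.sum_nil, add_zero]
      exact le_refl _
    | @cons _ z2 _ h2 q2 =>
      have hrest : 0 ≤ walkCost (fun _ => csig) f q2 :=
        walkCost_nonneg q2 _ f (fun b x => csig_nonneg x)
      have hc1 : 1 < csig (f (x, z)) := one_lt_csig _
      have hc2 : 1 < csig (f (z, z2)) := one_lt_csig _
      have hc3 : csig (f (x, y)) < 2 := csig_lt_two _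
      simp only [walkCost, Walk.darts_cons, List.map_cons, List.sum_cons] at *
      linarith

end Dummy

section MeasExt

open MeasureTheory

variable {I : Type}

noncomputable def subMS (μ : @OuterMeasure I) (T : Set I) : MeasurableSpace I :=
  (OuterMeasure.restrict T μ).caratheodory

noncomputable def subMeas (μ : OuterMeasure I) (T : Set I) : @Measure I (subMS μ T) :=
  @OuterMeasure.toMeasure I (subMS μ T) (OuterMeasure.restrict T μ) le_rfl

lemma subMS_le (m : MeasurableSpace I) (μ : @Measure I m) (T : Set I) :
    m ≤ subMS μ.toOuterMeasure T := by
  intro A hA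
  rw [subMS, OuterMeasure.isCaratheodory_iff]
  intro t
  simp only [OuterMeasure.restrict_apply]
  have h2 := (MeasureTheory.le_toOuterMeasure_caratheodory μ) A hA
  rw [OuterMeasure.isCaratheodory_iff] at h2
  rw [h2 (t ∩ T)]
  have e1 : t ∩ T ∩ A = t ∩ A ∩ T := by
    ext i; simp only [Set.mem_inter_iff]; tauto
  have e2 : (t ∩ T) \ A = (t \ A) ∩ T := by
    ext i; simp only [Set.mem_inter_iff, Set.mem_diff]; tauto
  rw [e1, e2]

lemma subMS_T (μ : OuterMeasure I) (T : Set I) : MeasurableSet[subMS μ T] T := by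
  rw [subMS, OuterMeasure.isCaratheodory_iff]
  intro t
  simp only [OuterMeasure.restrict_apply]
  have e1 : t ∩ T ∩ T = t ∩ T := by
    ext i; simp only [Set.mem_inter_iff]; tauto
  have e2 : (t \ T) ∩ T = ∅ := by
    ext i; simp only [Set.mem_inter_iff, Set.mem_diff, Set.mem_empty_iff_false]; tauto
  rw [e1, e2]
  simp

lemma subMeas_apply_union (m : MeasurableSpace I) (μ : @Measure I m) (T : Set I)
    {A : Set I} (hA : MeasurableSet[m] A) (hAT : A ⊆ T) (B : Set I)
    (hB : B = ∅ ∨ B = Tᶜ) :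
    subMeas μ.toOuterMeasure T (A ∪ B) = μ A := by
  have hmeasB : MeasurableSet[subMS μ.toOuterMeasure T] B := by
    rcases hB with rfl | rfl
    · exact @MeasurableSet.empty I (subMS μ.toOuterMeasure T)
    · exact MeasurableSet.compl (subMS_T μ.toOuterMeasure T)
  have hmeas : MeasurableSet[subMS μ.toOuterMeasure T] (A ∪ B) :=
    MeasurableSet.union (subMS_le m μ T A hA) hmeasB
  have happ := @MeasureTheory.toMeasure_apply I (subMS μ.toOuterMeasure T)
    (OuterMeasure.restrict T μ.toOuterMeasure) le_rfl (A ∪ B) hmeas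
  rw [subMeas, happ]
  simp only [OuterMeasure.restrict_apply]
  have e : (A ∪ B) ∩ T = A := by
    rcases hB with rfl | rfl
    · ext i
      simp only [Set.union_empty, Set.mem_inter_iff]
      exact ⟨fun h => h.1, fun h => ⟨h, hAT h⟩⟩
    · ext i
      simp only [Set.mem_inter_iff, Set.mem_union, Set.mem_compl_iff]
      constructor
      · rintro ⟨h | h, h2⟩
        · exact h
        · exact absurd h2 h
      · intro h; exact ⟨Or.inl h, hAT h⟩
  rw [e, Measure.coe_toOuterMeasure]

lemma subMeas_fin (m : MeasurableSpace I) (μ : @Measure I m) (hfin : IsFiniteMeasure μ)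
    (T : Set I) :
    @IsFiniteMeasure I (subMS μ.toOuterMeasure T) (subMeas μ.toOuterMeasure T) := by
  constructor
  have happ := @MeasureTheory.toMeasure_apply I (subMS μ.toOuterMeasure T)
    (OuterMeasure.restrict T μ.toOuterMeasure) le_rfl Set.univ
    (@MeasurableSet.univ I (subMS μ.toOuterMeasure T))
  rw [subMeas, happ]
  simp only [OuterMeasure.restrict_apply, Set.univ_inter]
  calc μ.toOuterMeasure T ≤ μ.toOuterMeasure Set.univ := μ.toOuterMeasure.mono (Set.subset_univ T)
    _ = μ Set.univ := by rw [Measure.coe_toOuterMeasure]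
    _ < ⊤ := measure_lt_top μ _

end MeasExt

section KL

open SimpleGraph MeasureTheory

lemma KL {V : Type} (G G' GG : SimpleGraph V) (hGG : GG = G ⊔ G')
    (v₀ : V) (S S' : Set V)
    (hGS : ∀ {a b : V}, G.Adj a b → a ∈ S ∧ b ∈ S)
    (hGS' : ∀ {a b : V}, G'.Adj a b → a ∈ S' ∧ b ∈ S')
    (hinter : S ∩ S' = {v₀})
    (hG : StrongUniquenessProperty G)
    (I : Type) (m : MeasurableSpace I) (μ : @Measure I m) (hfin : @IsFiniteMeasure I m μ)
    (od : I → V × V) (hod : ∀ i, (od i).1 ≠ (od i).2)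
    (c : I → V × V → ℝ → ℝ) (hcm : ∀ i b, StrictMono (c i b))
    (hcc : ∀ i b, Continuous (c i b)) (hcn : ∀ i b x, 0 ≤ c i b x)
    (σ σ' : (i : I) → GG.Walk (od i).1 (od i).2)
    (hσ : ∀ i, (σ i).IsPath) (hσ' : ∀ i, (σ' i).IsPath)
    (hm : ∀ b : V × V, @MeasurableSet I m {i | b ∈ (σ i).darts.map SimpleGraph.Dart.toProd})
    (hm' : ∀ b : V × V, @MeasurableSet I m {i | b ∈ (σ' i).darts.map SimpleGraph.Dart.toProd})
    (he : @IsWalkEquilibrium V I m μ GG od c σ) (he' : @IsWalkEquilibrium V I m μ GG od c σ')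
    (a : V × V) (haG : G.Adj a.1 a.2) :
    @walkFlow V I m μ GG od σ a = @walkFlow V I m μ GG od σ' a := by
  subst hGG
  classical
  have hadj : ∀ x y : V, (G ⊔ G').Adj x y ↔ G.Adj x y ∨ G'.Adj x y :=
    fun x y => sup_adj G G' x y
  have hv₀ : v₀ ∈ S ∩ S' := by rw [hinter]; rfl
  set T : Set I := {i | TSet S S' (od i)} with hTdef
  set odGc : I → V × V := fun i => odGfun S S' v₀ a (od i) with hodGdef
  choose σG hG1 hG2 hG3 hG4 using
    (fun i => exists_w hGS hGS' hinter haG (od i) (σ i) (hσ i))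
  choose σH hH1 hH2 hH3 hH4 using
    (fun i => exists_w hGS hGS' hinter haG (od i) (σ' i) (hσ' i))
  -- the darts-set equality
  have seteq : ∀ (τ : (i : I) → (G ⊔ G').Walk (od i).1 (od i).2), (∀ i, (τ i).IsPath) →
      ∀ (w : (i : I) → G.Walk (odGc i).1 (odGc i).2),
      (∀ i, TSet S S' (od i) → ∀ b : V × V, b ∈ (w i).darts.map Dart.toProd ↔
        (b ∈ (τ i).darts.map Dart.toProd ∧ G.Adj b.1 b.2)) →
      (∀ i, ¬ TSet S S' (od i) → (w i).darts.map Dart.toProd = [a]) →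
      ∀ b : V × V, G.Adj b.1 b.2 →
      {i | b ∈ (w i).darts.map Dart.toProd} =
        {i | b ∈ (τ i).darts.map Dart.toProd} ∪ (if b = a then Tᶜ else ∅) := by
    intro τ hτ w hw2 hw3 b hbG
    ext i
    by_cases hiT : TSet S S' (od i)
    · simp only [Set.mem_setOf_eq, Set.mem_union, hw2 i hiT b]
      constructor
      · rintro ⟨h, _⟩; exact Or.inl h
      · rintro (h | h)
        · exact ⟨h, hbG⟩
        · exfalso
          by_cases hba : b = a
          · rw [if_pos hba] at h; exact h hiT
          · rw [if_neg hba] at h; exact h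
    · simp only [Set.mem_setOf_eq, Set.mem_union, hw3 i hiT, List.mem_singleton]
      constructor
      · rintro rfl
        right; rw [if_pos rfl]; exact hiT
      · rintro (h | h)
        · exact absurd hbG
            (fun h' => (notT_no_Gdart hadj hGS hGS' hinter (hod i) (τ i) (hτ i) hiT h h').elim)
        · by_cases hba : b = a
          · exact hba
          · rw [if_neg hba] at h; exact h.elim
  -- subset of T
  have hsubT : ∀ (τ : (i : I) → (G ⊔ G').Walk (od i).1 (od i).2), (∀ i, (τ i).IsPath) →
      ∀ b : V × V, G.Adj b.1 b.2 →
      {i | b ∈ (τ i).darts.map Dart.toProd} ⊆ T := by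
    intro τ hτ b hbG i hi
    by_contra hiT
    exact notT_no_Gdart hadj hGS hGS' hinter (hod i) (τ i) (hτ i) hiT hi hbG
  -- measurability in the subgame
  have measG : ∀ (τ : (i : I) → (G ⊔ G').Walk (od i).1 (od i).2), (∀ i, (τ i).IsPath) →
      (∀ b : V × V, @MeasurableSet I m {i | b ∈ (τ i).darts.map Dart.toProd}) →
      ∀ (w : (i : I) → G.Walk (odGc i).1 (odGc i).2),
      (∀ i, TSet S S' (od i) → ∀ b : V × V, b ∈ (w i).darts.map Dart.toProd ↔
        (b ∈ (τ i).darts.map Dart.toProd ∧ G.Adj b.1 b.2)) →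
      (∀ i, ¬ TSet S S' (od i) → (w i).darts.map Dart.toProd = [a]) →
      ∀ b : V × V, MeasurableSet[(subMS μ.toOuterMeasure T)] {i | b ∈ (w i).darts.map Dart.toProd} := by
    intro τ hτ hmeasτ w hw2 hw3 b
    by_cases hbG : G.Adj b.1 b.2
    · rw [seteq τ hτ w hw2 hw3 b hbG]
      refine MeasurableSet.union (subMS_le m μ T _ (hmeasτ b)) ?_
      by_cases hba : b = a
      · rw [if_pos hba]; exact MeasurableSet.compl (subMS_T μ.toOuterMeasure T)
      · rw [if_neg hba]; exact @MeasurableSet.empty I (subMS μ.toOuterMeasure T)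
    · have : {i | b ∈ (w i).darts.map Dart.toProd} = ∅ := by
        ext i
        simp only [Set.mem_setOf_eq, Set.mem_empty_iff_false, iff_false]
        intro h
        exact hbG (adj_of_mem_dartsProd h)
      rw [this]; exact @MeasurableSet.empty I (subMS μ.toOuterMeasure T)
  -- flow identity
  have flow : ∀ (τ : (i : I) → (G ⊔ G').Walk (od i).1 (od i).2), (∀ i, (τ i).IsPath) →
      (∀ b : V × V, @MeasurableSet I m {i | b ∈ (τ i).darts.map Dart.toProd}) →
      ∀ (w : (i : I) → G.Walk (odGc i).1 (odGc i).2),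
      (∀ i, TSet S S' (od i) → ∀ b : V × V, b ∈ (w i).darts.map Dart.toProd ↔
        (b ∈ (τ i).darts.map Dart.toProd ∧ G.Adj b.1 b.2)) →
      (∀ i, ¬ TSet S S' (od i) → (w i).darts.map Dart.toProd = [a]) →
      ∀ b : V × V, G.Adj b.1 b.2 →
      @walkFlow V I (subMS μ.toOuterMeasure T) (subMeas μ.toOuterMeasure T) G odGc w b = @walkFlow V I m μ (G ⊔ G') od τ b := by
    intro τ hτ hmeasτ w hw2 hw3 b hbG
    simp only [walkFlow]
    congr 1
    rw [seteq τ hτ w hw2 hw3 b hbG]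
    apply subMeas_apply_union m μ T (hmeasτ b) (hsubT τ hτ b hbG)
    by_cases hba : b = a
    · rw [if_pos hba]; exact Or.inr rfl
    · rw [if_neg hba]; exact Or.inl rfl
  -- cost congruence
  have costcong : ∀ (τ : (i : I) → (G ⊔ G').Walk (od i).1 (od i).2), (∀ i, (τ i).IsPath) →
      (∀ b : V × V, @MeasurableSet I m {i | b ∈ (τ i).darts.map Dart.toProd}) →
      ∀ (w : (i : I) → G.Walk (odGc i).1 (odGc i).2),
      (∀ i, TSet S S' (od i) → ∀ b : V × V, b ∈ (w i).darts.map Dart.toProd ↔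
        (b ∈ (τ i).darts.map Dart.toProd ∧ G.Adj b.1 b.2)) →
      (∀ i, ¬ TSet S S' (od i) → (w i).darts.map Dart.toProd = [a]) →
      ∀ (x y : V) (w' : G.Walk x y) (cc : V × V → ℝ → ℝ),
      walkCost cc (@walkFlow V I (subMS μ.toOuterMeasure T) (subMeas μ.toOuterMeasure T) G odGc w) w' =
        walkCost cc (@walkFlow V I m μ (G ⊔ G') od τ) w' := by
    intro τ hτ hmeasτ w hw2 hw3 x y w' cc
    rw [walkCost_eq, walkCost_eq]
    apply congrArg List.sum
    apply List.map_congr_left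
    intro b hb
    rw [flow τ hτ hmeasτ w hw2 hw3 b (adj_of_mem_dartsProd hb)]
  -- the subgame cost functions
  set c2 : I → (V × V) → ℝ → ℝ :=
    fun i b => if TSet S S' (od i) then c i b else csig with hc2def
  have hc2m : ∀ i b, StrictMono (c2 i b) := by
    intro i b; rw [hc2def]; dsimp only
    split_ifs with h
    · exact hcm i b
    · exact csig_strictMono
  have hc2c : ∀ i b, Continuous (c2 i b) := by
    intro i b; rw [hc2def]; dsimp only
    split_ifs with h
    · exact hcc i b
    · exact csig_continuous
  have hc2n : ∀ i b x, 0 ≤ c2 i b x := by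
    intro i b x; rw [hc2def]; dsimp only
    split_ifs with h
    · exact hcn i b x
    · exact csig_nonneg x
  -- equilibrium in the subgame
  have equi : ∀ (τ : (i : I) → (G ⊔ G').Walk (od i).1 (od i).2), (∀ i, (τ i).IsPath) →
      (∀ b : V × V, @MeasurableSet I m {i | b ∈ (τ i).darts.map Dart.toProd}) →
      ∀ (w : (i : I) → G.Walk (odGc i).1 (odGc i).2),
      (∀ i, TSet S S' (od i) → ∀ b : V × V, b ∈ (w i).darts.map Dart.toProd ↔
        (b ∈ (τ i).darts.map Dart.toProd ∧ G.Adj b.1 b.2)) →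
      (∀ i, ¬ TSet S S' (od i) → (w i).darts.map Dart.toProd = [a]) →
      (∀ i, TSet S S' (od i) → ∀ pq : G.Walk (odGc i).1 (odGc i).2, pq.IsPath →
        ∃ P : (G ⊔ G').Walk (od i).1 (od i).2, P.IsPath ∧
          ∀ (cc : V × V → ℝ → ℝ) (f : V × V → ℝ),
          walkCost cc f (τ i) + walkCost cc f pq = walkCost cc f P + walkCost cc f (w i)) →
      (@IsWalkEquilibrium V I m μ (G ⊔ G') od c τ) →
      @IsWalkEquilibrium V I (subMS μ.toOuterMeasure T) (subMeas μ.toOuterMeasure T) G odGc c2 w := by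
    intro τ hτ hmeasτ w hw2 hw3 hw4 heτ
    intro i pq hpq
    by_cases hiT : TSet S S' (od i)
    · have hceq : c2 i = c i := funext fun b => if_pos hiT
      rw [hceq, costcong τ hτ hmeasτ w hw2 hw3 _ _ (w i) (c i),
        costcong τ hτ hmeasτ w hw2 hw3 _ _ pq (c i)]
      obtain ⟨P, hP, hcost⟩ := hw4 i hiT pq hpq
      have h1 := heτ i P hP
      have h2 := hcost (c i) (@walkFlow V I m μ (G ⊔ G') od τ)
      linarith
    · have hceq : c2 i = fun _ => csig := funext fun b => if_neg hiT
      rw [hceq]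
      have e : odGc i = a := odGfun_notT hiT
      rw [walkCost_eq, hw3 i hiT]
      simp only [List.map_cons, List.map_nil, List.sum_cons, List.sum_nil, add_zero]
      exact dummyMin haG (@walkFlow V I (subMS μ.toOuterMeasure T) (subMeas μ.toOuterMeasure T) G odGc w) pq hpq
        (congrArg Prod.fst e) (congrArg Prod.snd e)
  -- apply the uniqueness property of G
  have main := hG {ℓ : V × V | ℓ.1 ≠ ℓ.2} (fun ℓ h => h) I (subMS μ.toOuterMeasure T) (subMeas μ.toOuterMeasure T)
    (subMeas_fin m μ hfin T) odGc
    (fun i => odGfun_ne hv₀.1 hv₀.2 (hod i) haG.ne) c2 hc2m hc2c hc2n σG σH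
    hG1 hH1
    (measG σ hσ hm σG hG2 hG3) (measG σ' hσ' hm' σH hH2 hH3)
    (equi σ hσ hm σG hG2 hG3 hG4 he) (equi σ' hσ' hm' σH hH2 hH3 hH4 he') a
  have f1 := flow σ hσ hm σG hG2 hG3 a haG
  have f2 := flow σ' hσ' hm' σH hH2 hH3 a haG
  rw [← f1, ← f2, main]

end KL


/-- The 1-sum operation preserves the strong uniqueness property:
if `G` and `G'` have the strong uniqueness property, all edges of `G` lie in `S`, all
edges of `G'` lie in `S'`, and `S ∩ S' = {v₀}` (the two graphs share exactly the
vertex `v₀`), then the union `G ⊔ G'` (the gluing of `G` and `G'` at `v₀`) has the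
strong uniqueness property. -/
theorem oneSum_preserves_strongUniqueness {V : Type} (G G' : SimpleGraph V)
    (v₀ : V) (S S' : Set V)
    (hGS : ∀ {a b : V}, G.Adj a b → a ∈ S ∧ b ∈ S)
    (hGS' : ∀ {a b : V}, G'.Adj a b → a ∈ S' ∧ b ∈ S')
    (hinter : S ∩ S' = {v₀})
    (hG : StrongUniquenessProperty G) (hG' : StrongUniquenessProperty G') :
    StrongUniquenessProperty (G ⊔ G') := by
  intro Hd hHd I m μ hfin od hodH c hc1 hc2 hc3 σ σ' hσ hσ' hm hm' he he' a
  have hod : ∀ i, (od i).1 ≠ (od i).2 := fun i => hHd _ (hodH i)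
  by_cases haG : G.Adj a.1 a.2
  · exact KL G G' (G ⊔ G') rfl v₀ S S' hGS hGS' hinter hG I m μ hfin od hod c hc1 hc2 hc3
      σ σ' hσ hσ' hm hm' he he' a haG
  · by_cases haG' : G'.Adj a.1 a.2
    · exact KL G' G (G ⊔ G') (sup_comm G G') v₀ S' S hGS' hGS
        (by rw [Set.inter_comm]; exact hinter) hG' I m μ hfin od hod c hc1 hc2 hc3
        σ σ' hσ hσ' hm hm' he he' a haG'
    · have h0 : ∀ τ : (i : I) → (G ⊔ G').Walk (od i).1 (od i).2,
          @walkFlow V I m μ (G ⊔ G') od τ a = 0 := by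
        intro τ
        have hempty : {i | a ∈ (τ i).darts.map SimpleGraph.Dart.toProd} = ∅ := by
          ext i
          simp only [Set.mem_setOf_eq, Set.mem_empty_iff_false, iff_false]
          intro h
          rcases (SimpleGraph.sup_adj G G' a.1 a.2).1 (adj_of_mem_dartsProd h) with h2 | h2
          exacts [haG h2, haG' h2]
        simp only [walkFlow]
        rw [hempty]
        simp
      rw [h0 σ, h0 σ']
end

section
/- Let G be a cycle with OD-pairs L, and let σ, σ̂ be two Nash equilibria. For any user i with OD-pair ℓ who changes route between σ and σ̂ (δ(i) ≠ 0, where δ(i) = 1_{σ(i)=r_i^+} − 1_{σ̂(i)=r_i^+}), exactly one of the following holds: (1) there exists J ⊆ L with ℓ ∈ J, A_J ≠ ∅, and δ(i)·Δ_J < 0; or (2) for all J ⊆ L with ℓ ∈ J and A_J ≠ ∅, Δ_J = 0. -/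
open scoped Classical
open MeasureTheory

/-- The positive (counterclockwise) route of the OD-pair `(o, d)` on the cycle with
vertex set `ZMod n` contains the positive arc at edge `v` (the arc from `v` to `v + 1`)
iff `posRoute n o d v` holds. -/
def posRoute (n : ℕ) (o d v : ZMod n) : Prop := (v - o).val < (d - o).val

/-- The negative (clockwise) route of `(o, d)` contains the negative arc at edge `v`
(the arc from `v + 1` to `v`) iff `negRoute n o d v` holds. -/
def negRoute (n : ℕ) (o d v : ZMod n) : Prop := (v - d).val < (o - d).val

/-- An arc of the directed version of the cycle is a pair `(v, b)`: for `b = true` the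
positive arc `v → v + 1`, for `b = false` the negative arc `v + 1 → v`.
`inRoute n o d b a` says that arc `a` lies on the route of direction `b` of the
OD-pair `(o, d)`. -/
def inRoute (n : ℕ) (o d : ZMod n) (b : Bool) (a : ZMod n × Bool) : Prop :=
  a.2 = b ∧ (if b then posRoute n o d a.1 else negRoute n o d a.1)

/-- Flow induced on arc `a` by the strategy profile `σ` (`σ i = true` means that
user `i` chooses their positive route, `σ i = false` their negative route). -/
noncomputable def flow {I : Type} [MeasurableSpace I] (μ : Measure I) (n : ℕ)
    (od : I → ZMod n × ZMod n) (σ : I → Bool) (a : ZMod n × Bool) : ℝ :=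
  (μ {i | inRoute n (od i).1 (od i).2 (σ i) a}).toReal

/-- The cost, for user `i`, of their route in direction `b`, given arc flows `f`:
the sum over the arcs of that route of the user-specific arc costs. -/
noncomputable def routeCost {I : Type} (n : ℕ) [NeZero n]
    (c : I → ZMod n × Bool → ℝ → ℝ) (f : ZMod n × Bool → ℝ)
    (od : I → ZMod n × ZMod n) (i : I) (b : Bool) : ℝ :=
  ∑ a ∈ Finset.univ.filter (fun a : ZMod n × Bool => inRoute n (od i).1 (od i).2 b a),
    c i a (f a)

/-- `σ` is a Nash equilibrium: every user's chosen route is a minimal-cost route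
given the induced flows. -/
def IsEquilibrium {I : Type} [MeasurableSpace I] (μ : Measure I) (n : ℕ) [NeZero n]
    (od : I → ZMod n × ZMod n) (c : I → ZMod n × Bool → ℝ → ℝ) (σ : I → Bool) : Prop :=
  ∀ (i : I) (b : Bool),
    routeCost n c (flow μ n od σ) od i (σ i) ≤ routeCost n c (flow μ n od σ) od i b

lemma cycle_split_lem {I : Type} [MeasurableSpace I] (μ : Measure I) [IsFiniteMeasure μ]
    {n : ℕ} (od : I → ZMod n × ZMod n) (σ : I → Bool) (J : Finset (ZMod n × ZMod n))
    (h : MeasurableSet {i | od i ∈ J ∧ σ i = true}) :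
    (μ {i | od i ∈ J ∧ σ i = false}).toReal =
      (μ {i | od i ∈ J}).toReal - (μ {i | od i ∈ J ∧ σ i = true}).toReal := by
  have hset : {i | od i ∈ J ∧ σ i = false} =
      {i | od i ∈ J} \ {i | od i ∈ J ∧ σ i = true} := by
    ext j; cases hj : σ j <;> simp [hj]
  have hd : μ ({i | od i ∈ J} \ {i | od i ∈ J ∧ σ i = true}) =
      μ {i | od i ∈ J} - μ {i | od i ∈ J ∧ σ i = true} :=
    measure_diff (fun j hj => hj.1) h.nullMeasurableSet (measure_ne_top μ _)
  rw [hset, hd,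
    ENNReal.toReal_sub_of_le (measure_mono fun j hj => hj.1) (measure_ne_top μ _)]

lemma cycle_flow_eq {I : Type} [MeasurableSpace I] (μ : Measure I) (n : ℕ)
    (L : Finset (ZMod n × ZMod n)) (od : I → ZMod n × ZMod n) (hod : ∀ i, od i ∈ L)
    (σ : I → Bool) (a : ZMod n × Bool) :
    flow μ n od σ a =
      (μ {j | od j ∈ L.filter (fun ℓ => inRoute n ℓ.1 ℓ.2 a.2 a) ∧ σ j = a.2}).toReal := by
  have hset : {j | inRoute n (od j).1 (od j).2 (σ j) a} =
      {j | od j ∈ L.filter (fun ℓ => inRoute n ℓ.1 ℓ.2 a.2 a) ∧ σ j = a.2} := by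
    ext j
    obtain ⟨v, b⟩ := a
    cases b <;> cases hj : σ j <;>
      simp [inRoute, hod j, hj, Finset.mem_filter]
  unfold flow
  rw [hset]

lemma cycle_main_aux (n : ℕ) [NeZero n]
    (L : Finset (ZMod n × ZMod n))
    {I : Type} [MeasurableSpace I] (μ : Measure I) [IsFiniteMeasure μ]
    (od : I → ZMod n × ZMod n) (hod : ∀ i, od i ∈ L)
    (c : I → ZMod n × Bool → ℝ → ℝ)
    (hmono : ∀ i a, StrictMono (c i a))
    (σ σ' : I → Bool)
    (hmeas : ∀ J : Finset (ZMod n × ZMod n), MeasurableSet {i | od i ∈ J ∧ σ i = true})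
    (hmeas' : ∀ J : Finset (ZMod n × ZMod n), MeasurableSet {i | od i ∈ J ∧ σ' i = true})
    (heq : IsEquilibrium μ n od c σ) (heq' : IsEquilibrium μ n od c σ')
    (i : I) (hσi : σ i = true) (hσ'i : σ' i = false)
    (h0 : ∀ J ⊆ L, od i ∈ J →
        (∃ a : ZMod n × Bool, ∀ ℓ ∈ L, (inRoute n ℓ.1 ℓ.2 a.2 a ↔ ℓ ∈ J)) →
        0 ≤ (μ {j | od j ∈ J ∧ σ j = true}).toReal -
          (μ {j | od j ∈ J ∧ σ' j = true}).toReal) :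
    ∀ J ⊆ L, od i ∈ J →
        (∃ a : ZMod n × Bool, ∀ ℓ ∈ L, (inRoute n ℓ.1 ℓ.2 a.2 a ↔ ℓ ∈ J)) →
        (μ {j | od j ∈ J ∧ σ j = true}).toReal -
          (μ {j | od j ∈ J ∧ σ' j = true}).toReal = 0 := by
  classical
  set P : Finset (ZMod n × Bool) :=
    Finset.univ.filter (fun a => inRoute n (od i).1 (od i).2 true a) with hP
  set N : Finset (ZMod n × Bool) :=
    Finset.univ.filter (fun a => inRoute n (od i).1 (od i).2 false a) with hN
  set g : ZMod n × Bool → ℝ := fun a =>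
    if a.2 then c i a (flow μ n od σ a) - c i a (flow μ n od σ' a)
    else c i a (flow μ n od σ' a) - c i a (flow μ n od σ a) with hg
  -- per-arc facts
  have key : ∀ a : ZMod n × Bool, inRoute n (od i).1 (od i).2 a.2 a →
      0 ≤ g a ∧ (g a = 0 →
        (μ {j | od j ∈ L.filter (fun ℓ => inRoute n ℓ.1 ℓ.2 a.2 a) ∧ σ j = true}).toReal -
          (μ {j | od j ∈ L.filter (fun ℓ => inRoute n ℓ.1 ℓ.2 a.2 a) ∧ σ' j = true}).toReal
          = 0) := by
    intro a hai
    set Ja : Finset (ZMod n × ZMod n) :=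
      L.filter (fun ℓ => inRoute n ℓ.1 ℓ.2 a.2 a) with hJa
    have hJsub : Ja ⊆ L := Finset.filter_subset _ _
    have hiJa : od i ∈ Ja := Finset.mem_filter.mpr ⟨hod i, hai⟩
    have hwit : ∀ ℓ ∈ L, (inRoute n ℓ.1 ℓ.2 a.2 a ↔ ℓ ∈ Ja) := by
      intro ℓ hℓ
      simp [hJa, Finset.mem_filter, hℓ]
    have hΔ : 0 ≤ (μ {j | od j ∈ Ja ∧ σ j = true}).toReal -
        (μ {j | od j ∈ Ja ∧ σ' j = true}).toReal := h0 Ja hJsub hiJa ⟨a, hwit⟩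
    have hfσ := cycle_flow_eq μ n L od hod σ a
    have hfσ' := cycle_flow_eq μ n L od hod σ' a
    obtain ⟨v, b⟩ := a
    cases b with
    | true =>
      have hfσ1 : flow μ n od σ (v, true) =
          (μ {j | od j ∈ Ja ∧ σ j = true}).toReal := hfσ
      have hfσ'1 : flow μ n od σ' (v, true) =
          (μ {j | od j ∈ Ja ∧ σ' j = true}).toReal := hfσ'
      have hle : flow μ n od σ' (v, true) ≤ flow μ n od σ (v, true) := by
        rw [hfσ1, hfσ'1]; linarith
      constructor
      · simpa [hg] using sub_nonneg.mpr ((hmono i (v, true)).monotone hle)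
      · intro hz
        have hz' : c i (v, true) (flow μ n od σ (v, true)) -
            c i (v, true) (flow μ n od σ' (v, true)) = 0 := by simpa [hg] using hz
        have hceq : c i (v, true) (flow μ n od σ (v, true)) =
            c i (v, true) (flow μ n od σ' (v, true)) := by linarith
        have := (hmono i (v, true)).injective hceq
        rw [hfσ1, hfσ'1] at this
        linarith
    | false =>
      have hsp := cycle_split_lem μ od σ Ja (hmeas Ja)
      have hsp' := cycle_split_lem μ od σ' Ja (hmeas' Ja)
      have hfσ1 : flow μ n od σ (v, false) =
          (μ {j | od j ∈ Ja}).toReal - (μ {j | od j ∈ Ja ∧ σ j = true}).toReal := by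
        rw [hfσ]; exact hsp
      have hfσ'1 : flow μ n od σ' (v, false) =
          (μ {j | od j ∈ Ja}).toReal - (μ {j | od j ∈ Ja ∧ σ' j = true}).toReal := by
        rw [hfσ']; exact hsp'
      have hle : flow μ n od σ (v, false) ≤ flow μ n od σ' (v, false) := by
        rw [hfσ1, hfσ'1]; linarith
      constructor
      · simpa [hg] using sub_nonneg.mpr ((hmono i (v, false)).monotone hle)
      · intro hz
        have hz' : c i (v, false) (flow μ n od σ' (v, false)) -
            c i (v, false) (flow μ n od σ (v, false)) = 0 := by simpa [hg] using hz
        have hceq : c i (v, false) (flow μ n od σ (v, false)) =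
            c i (v, false) (flow μ n od σ' (v, false)) := by linarith
        have := (hmono i (v, false)).injective hceq
        rw [hfσ1, hfσ'1] at this
        linarith
  -- the two equilibrium inequalities
  have h1 : routeCost n c (flow μ n od σ) od i true ≤
      routeCost n c (flow μ n od σ) od i false := by
    have := heq i false; rwa [hσi] at this
  have h2 : routeCost n c (flow μ n od σ') od i false ≤
      routeCost n c (flow μ n od σ') od i true := by
    have := heq' i true; rwa [hσ'i] at this
  have hPN : Disjoint P N := by
    rw [Finset.disjoint_left]
    intro a haP haN
    have h1 : a.2 = true := ((Finset.mem_filter.mp haP).2).1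
    have h2 : a.2 = false := ((Finset.mem_filter.mp haN).2).1
    rw [h1] at h2; exact Bool.noConfusion h2
  have hsum_le : ∑ a ∈ P ∪ N, g a ≤ 0 := by
    rw [Finset.sum_union hPN]
    have e1 : ∑ a ∈ P, g a =
        ∑ a ∈ P, (c i a (flow μ n od σ a) - c i a (flow μ n od σ' a)) := by
      refine Finset.sum_congr rfl fun a haP => ?_
      have h2 : a.2 = true := ((Finset.mem_filter.mp haP).2).1
      simp [hg, h2]
    have e2 : ∑ a ∈ N, g a =
        ∑ a ∈ N, (c i a (flow μ n od σ' a) - c i a (flow μ n od σ a)) := by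
      refine Finset.sum_congr rfl fun a haN => ?_
      have h2 : a.2 = false := ((Finset.mem_filter.mp haN).2).1
      simp [hg, h2]
    rw [e1, e2, Finset.sum_sub_distrib, Finset.sum_sub_distrib]
    unfold routeCost at h1 h2
    rw [← hP, ← hN] at h1 h2
    linarith
  have hmemPN : ∀ a ∈ P ∪ N, inRoute n (od i).1 (od i).2 a.2 a := by
    intro a ha
    rcases Finset.mem_union.mp ha with h | h
    · have h' := (Finset.mem_filter.mp h).2
      rw [h'.1]; exact h'
    · have h' := (Finset.mem_filter.mp h).2
      rw [h'.1]; exact h'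
  have hnn : ∀ a ∈ P ∪ N, 0 ≤ g a := fun a ha => (key a (hmemPN a ha)).1
  have hzero : ∀ a ∈ P ∪ N, g a = 0 := by
    have hsum0 : ∑ a ∈ P ∪ N, g a = 0 :=
      le_antisymm hsum_le (Finset.sum_nonneg hnn)
    exact (Finset.sum_eq_zero_iff_of_nonneg hnn).mp hsum0
  -- conclusion
  intro J hJL hiJ hw
  obtain ⟨a, ha⟩ := hw
  have hia : inRoute n (od i).1 (od i).2 a.2 a := (ha (od i) (hod i)).mpr hiJ
  have haPN : a ∈ P ∪ N := by
    rcases hb : a.2 with _ | _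
    · refine Finset.mem_union_right _ (Finset.mem_filter.mpr ⟨Finset.mem_univ _, ?_⟩)
      rw [← hb]; exact hia
    · refine Finset.mem_union_left _ (Finset.mem_filter.mpr ⟨Finset.mem_univ _, ?_⟩)
      rw [← hb]; exact hia
  have hJeq : J = L.filter (fun ℓ => inRoute n ℓ.1 ℓ.2 a.2 a) := by
    ext ℓ
    simp only [Finset.mem_filter]
    constructor
    · intro hℓ; exact ⟨hJL hℓ, (ha ℓ (hJL hℓ)).mpr hℓ⟩
    · rintro ⟨hℓL, hr⟩; exact (ha ℓ hℓL).mp hr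
  rw [hJeq]
  exact (key a hia).2 (hzero a haPN)

/-- Let `σ, σ'` be two Nash equilibria on the cycle. For any user `i`
who changes route between the equilibria (`δ i ≠ 0`, where
`δ i = 1_{σ i = +} − 1_{σ' i = +}`), exactly one of the following holds:
(1) there is `J ⊆ L` containing the OD-pair of `i` with `A_J ≠ ∅` and `δ i · Δ_J < 0`;
(2) for all `J ⊆ L` containing the OD-pair of `i` with `A_J ≠ ∅`, `Δ_J = 0`.
Here `Δ_J = f_J^+ − f̂_J^+` and `A_J ≠ ∅` means some arc lies (in its own direction)
on the routes of exactly the pairs in `J`. -/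
theorem equilibria_alternative (n : ℕ) [NeZero n] (hn : 3 ≤ n)
    (L : Finset (ZMod n × ZMod n)) (hL : ∀ ℓ ∈ L, ℓ.1 ≠ ℓ.2)
    {I : Type} [MeasurableSpace I] (μ : Measure I) [IsFiniteMeasure μ]
    (od : I → ZMod n × ZMod n) (hod : ∀ i, od i ∈ L)
    (c : I → ZMod n × Bool → ℝ → ℝ)
    (hmono : ∀ i a, StrictMono (c i a)) (hcont : ∀ i a, Continuous (c i a))
    (hnonneg : ∀ i a x, 0 ≤ c i a x)
    (σ σ' : I → Bool)
    (hmeas : ∀ J : Finset (ZMod n × ZMod n), MeasurableSet {i | od i ∈ J ∧ σ i = true})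
    (hmeas' : ∀ J : Finset (ZMod n × ZMod n),
      MeasurableSet {i | od i ∈ J ∧ σ' i = true})
    (hm : ∀ a, MeasurableSet {i | inRoute n (od i).1 (od i).2 (σ i) a})
    (hm' : ∀ a, MeasurableSet {i | inRoute n (od i).1 (od i).2 (σ' i) a})
    (heq : IsEquilibrium μ n od c σ) (heq' : IsEquilibrium μ n od c σ')
    (i : I)
    (hδ : ((if σ i then (1 : ℤ) else 0) - (if σ' i then 1 else 0)) ≠ 0) :
    Xor'
      (∃ J ⊆ L, od i ∈ J ∧
        (∃ a : ZMod n × Bool, ∀ ℓ ∈ L, (inRoute n ℓ.1 ℓ.2 a.2 a ↔ ℓ ∈ J)) ∧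
        (((if σ i then (1 : ℝ) else 0) - (if σ' i then 1 else 0)) *
          ((μ {j | od j ∈ J ∧ σ j = true}).toReal -
            (μ {j | od j ∈ J ∧ σ' j = true}).toReal) < 0))
      (∀ J ⊆ L, od i ∈ J →
        (∃ a : ZMod n × Bool, ∀ ℓ ∈ L, (inRoute n ℓ.1 ℓ.2 a.2 a ↔ ℓ ∈ J)) →
        (μ {j | od j ∈ J ∧ σ j = true}).toReal -
          (μ {j | od j ∈ J ∧ σ' j = true}).toReal = 0) := by
  classical
  by_cases hPex : (∃ J ⊆ L, od i ∈ J ∧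
      (∃ a : ZMod n × Bool, ∀ ℓ ∈ L, (inRoute n ℓ.1 ℓ.2 a.2 a ↔ ℓ ∈ J)) ∧
      (((if σ i then (1 : ℝ) else 0) - (if σ' i then 1 else 0)) *
        ((μ {j | od j ∈ J ∧ σ j = true}).toReal -
          (μ {j | od j ∈ J ∧ σ' j = true}).toReal) < 0))
  · left
    refine ⟨hPex, ?_⟩
    intro hQ
    obtain ⟨J, hJL, hiJ, hw, hlt⟩ := hPex
    rw [hQ J hJL hiJ hw, mul_zero] at hlt
    exact lt_irrefl _ hlt
  · right
    refine ⟨?_, hPex⟩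
    push_neg at hPex
    cases hs : σ i with
    | true =>
      cases hs' : σ' i with
      | true => exfalso; rw [hs, hs'] at hδ; simp at hδ
      | false =>
        refine cycle_main_aux n L μ od hod c hmono σ σ' hmeas hmeas' heq heq' i hs hs' ?_
        intro J hJL hiJ hw
        have := hPex J hJL hiJ hw
        rw [hs, hs'] at this
        simpa using this
    | false =>
      cases hs' : σ' i with
      | false => exfalso; rw [hs, hs'] at hδ; simp at hδ
      | true =>
        intro J hJL hiJ hw
        have key := cycle_main_aux n L μ od hod c hmono σ' σ hmeas' hmeas heq' heq i hs' hs ?_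
          J hJL hiJ hw
        · linarith
        · intro J' hJL' hiJ' hw'
          have := hPex J' hJL' hiJ' hw'
          rw [hs, hs'] at this
          have h1 : ((if false = true then (1:ℝ) else 0) - if true = true then 1 else 0) = -1 := by
            norm_num
          rw [h1, neg_one_mul] at this
          linarith
end
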